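/- Fix σ_M > 0 and set p = Φ(−1/σ_M). For each σ_W > 0, set σ² = σ_M² + σ_W², p_W = Φ(−1/√(σ_M² + σ_W²)), and let I(X;W) denote the mutual information between X uniform on {−1,1} and W = X + N, where N is an independent Gaussian with mean 0 and variance σ². Then the maximum equivocation loss tends to zero as the wiretap noise power grows: lim_{σ_W → ∞} (h(p_W) − 1 + I(X;W)) / (h(p_W) − h(p)) = 0. -/

import Mathlib

open MeasureTheory ProbabilityTheory Filter
open scoped NNReal ENNReal

/-- Binary entropy function (base 2). -/
noncomputable def binEnt (x : ℝ) : ℝ := -(x * Real.logb 2 x) - (1 - x) * Real.logb 2 (1 - x)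

/-- The cumulative distribution function of the standard normal distribution. -/
noncomputable def stdNormalCDF (x : ℝ) : ℝ := ((gaussianReal 0 1) (Set.Iic x)).toReal

/-- Kullback–Leibler divergence in bits: `∫ log(dμ/dν) dμ / log 2`. -/
noncomputable def klBits {α : Type*} [MeasurableSpace α] (μ ν : Measure α) : ℝ :=
  (∫ x, llr μ ν x ∂μ) / Real.log 2

/-- The joint law of `(X, W)` where `X` is uniform on `{-1,1}` and `W = X + N` with `N`
an independent Gaussian of mean `0` and variance `σ²`. -/
noncomputable def jointLawXW (σ : ℝ) : Measure (ℝ × ℝ) :=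
  (2 : ℝ≥0∞)⁻¹ • Measure.map (fun n => ((1 : ℝ), 1 + n)) (gaussianReal 0 (σ ^ 2).toNNReal)
    + (2 : ℝ≥0∞)⁻¹ • Measure.map (fun n => ((-1 : ℝ), -1 + n)) (gaussianReal 0 (σ ^ 2).toNNReal)

/-- `I(X;W)` (in bits) for `X` uniform on `{-1,1}` and `W = X + N`, `N` Gaussian with
mean `0` and variance `σ²`: the KL divergence of the joint law from the product of the
marginal laws. -/
noncomputable def mutualInfoAntipodalAWGN (σ : ℝ) : ℝ :=
  klBits (jointLawXW σ) ((jointLawXW σ).fst.prod (jointLawXW σ).snd)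

section EquivocationAux
open Real


noncomputable def mixFst : Measure ℝ :=
  (2 : ℝ≥0∞)⁻¹ • Measure.dirac 1 + (2 : ℝ≥0∞)⁻¹ • Measure.dirac (-1)

noncomputable def baseMeas : Measure (ℝ × ℝ) := mixFst.prod volume

instance : IsFiniteMeasure mixFst := by
  constructor
  simp [mixFst]

instance : SigmaFinite baseMeas := by unfold baseMeas; infer_instance

noncomputable def Fden (σ : ℝ) : ℝ × ℝ → ℝ≥0∞ := fun q => gaussianPDF q.1 (σ^2).toNNReal q.2

noncomputable def Gden (σ : ℝ) : ℝ × ℝ → ℝ≥0∞ := fun q =>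
  2⁻¹ * gaussianPDF 1 (σ^2).toNNReal q.2 + 2⁻¹ * gaussianPDF (-1) (σ^2).toNNReal q.2

lemma var_ne_zero {σ : ℝ} (hσ : 0 < σ) : (σ^2).toNNReal ≠ 0 := by
  simp [Real.toNNReal_eq_zero, not_le, pow_pos hσ, hσ.ne']

lemma measurable_Fden (σ : ℝ) : Measurable (Fden σ) := by
  unfold Fden gaussianPDF gaussianPDFReal
  exact (Measurable.ennreal_ofReal (by fun_prop))

lemma measurable_Gden (σ : ℝ) : Measurable (Gden σ) := by
  unfold Gden
  exact (((measurable_gaussianPDF _ _).comp measurable_snd).const_mul _).add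
    (((measurable_gaussianPDF _ _).comp measurable_snd).const_mul _)

lemma map_pair_eq (σ : ℝ) (c : ℝ) :
    Measure.map (fun n => ((c : ℝ), c + n)) (gaussianReal 0 (σ^2).toNNReal)
      = Measure.map (Prod.mk c) (gaussianReal c (σ^2).toNNReal) := by
  have : (fun n : ℝ => ((c : ℝ), c + n)) = (Prod.mk c) ∘ (fun n => c + n) := rfl
  rw [this, ← Measure.map_map measurable_prodMk_left (measurable_const_add c),
    gaussianReal_map_const_add, zero_add]

lemma smul_prod_aux {α β : Type*} [MeasurableSpace α] [MeasurableSpace β]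
    (c : ℝ≥0∞) (a : Measure α) (m : Measure β) [SFinite m] :
    (c • a).prod m = c • (a.prod m) := by
  ext s hs
  rw [Measure.prod_apply hs, Measure.smul_apply, Measure.prod_apply hs,
    lintegral_smul_measure, smul_eq_mul]

lemma map_withDensity_aux {α β : Type*} [MeasurableSpace α] [MeasurableSpace β]
    {f : α → β} (hf : Measurable f) (μ : Measure α) {g : β → ℝ≥0∞} (hg : Measurable g) :
    Measure.map f (μ.withDensity (g ∘ f)) = (Measure.map f μ).withDensity g := by
  ext s hs
  rw [Measure.map_apply hf hs, withDensity_apply _ hs, withDensity_apply _ (hf hs),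
    Measure.restrict_map hf hs, lintegral_map hg hf]
  rfl

lemma joint_eq_withDensity {σ : ℝ} (hσ : 0 < σ) :
    jointLawXW σ = baseMeas.withDensity (Fden σ) := by
  have hdp : ∀ c : ℝ, ((Measure.dirac c).prod (volume : Measure ℝ)).withDensity (Fden σ)
      = Measure.map (Prod.mk c) (gaussianReal c (σ^2).toNNReal) := by
    intro c
    rw [Measure.dirac_prod, ← map_withDensity_aux measurable_prodMk_left _ (measurable_Fden σ),
      gaussianReal_of_var_ne_zero c (var_ne_zero hσ)]
    rfl
  rw [jointLawXW, baseMeas, mixFst, Measure.add_prod, smul_prod_aux, smul_prod_aux,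
    withDensity_add_measure, withDensity_smul_measure, withDensity_smul_measure,
    hdp 1, hdp (-1), map_pair_eq σ 1, map_pair_eq σ (-1)]

instance inst_prob_joint (σ : ℝ) : IsProbabilityMeasure (jointLawXW σ) := by
  constructor
  rw [jointLawXW]
  have h1 : Measurable (fun n : ℝ => ((1:ℝ), 1 + n)) := by fun_prop
  have h2 : Measurable (fun n : ℝ => ((-1:ℝ), -1 + n)) := by fun_prop
  simp [Measure.map_apply h1 MeasurableSet.univ, Measure.map_apply h2 MeasurableSet.univ]
  rw [← ENNReal.inv_two_add_inv_two]

lemma fst_joint (σ : ℝ) : (jointLawXW σ).fst = mixFst := by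
  have h1 : Measurable (fun n : ℝ => ((1:ℝ), 1 + n)) := by fun_prop
  have h2 : Measurable (fun n : ℝ => ((-1:ℝ), -1 + n)) := by fun_prop
  rw [jointLawXW, Measure.fst, Measure.map_add _ _ measurable_fst, mixFst]
  rw [Measure.map_smul, Measure.map_smul,
    Measure.map_map measurable_fst h1, Measure.map_map measurable_fst h2]
  have : (Prod.fst ∘ fun n : ℝ => ((1:ℝ), 1 + n)) = fun _ : ℝ => (1:ℝ) := rfl
  rw [this]
  have : (Prod.fst ∘ fun n : ℝ => ((-1:ℝ), -1 + n)) = fun _ : ℝ => (-1:ℝ) := rfl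
  rw [this, Measure.map_const, Measure.map_const]
  simp

lemma snd_joint {σ : ℝ} (hσ : 0 < σ) :
    (jointLawXW σ).snd = (2 : ℝ≥0∞)⁻¹ • gaussianReal 1 (σ^2).toNNReal
      + (2 : ℝ≥0∞)⁻¹ • gaussianReal (-1) (σ^2).toNNReal := by
  have h1 : Measurable (fun n : ℝ => ((1:ℝ), 1 + n)) := by fun_prop
  have h2 : Measurable (fun n : ℝ => ((-1:ℝ), -1 + n)) := by fun_prop
  rw [jointLawXW, Measure.snd, Measure.map_add _ _ measurable_snd]
  rw [Measure.map_smul, Measure.map_smul,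
    Measure.map_map measurable_snd h1, Measure.map_map measurable_snd h2]
  have e1 : (Prod.snd ∘ fun n : ℝ => ((1:ℝ), 1 + n)) = fun n : ℝ => (1:ℝ) + n := rfl
  have e2 : (Prod.snd ∘ fun n : ℝ => ((-1:ℝ), -1 + n)) = fun n : ℝ => (-1:ℝ) + n := rfl
  rw [e1, e2, gaussianReal_map_const_add, gaussianReal_map_const_add, zero_add, zero_add]

lemma prod_withDensity_snd {α β : Type*} [MeasurableSpace α] [MeasurableSpace β]
    (a : Measure α) [SigmaFinite a] (m : Measure β) [SigmaFinite m] {g : β → ℝ≥0∞}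
    (hg : Measurable g) (hgt : ∀ y, g y ≠ ∞) :
    a.prod (m.withDensity g) = (a.prod m).withDensity (fun q => g q.2) := by
  have : SigmaFinite (m.withDensity g) :=
    SigmaFinite.withDensity_of_ne_top (ae_of_all _ hgt)
  refine (Measure.prod_eq fun s t hs ht => ?_)
  rw [withDensity_apply _ (hs.prod ht), ← Measure.prod_restrict,
    MeasureTheory.lintegral_prod (fun z => g z.2) (hg.comp measurable_snd).aemeasurable]
  simp only [lintegral_const, Measure.restrict_apply_univ]
  rw [← withDensity_apply _ ht, mul_comm]

lemma prodMarg_eq_withDensity {σ : ℝ} (hσ : 0 < σ) :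
    (jointLawXW σ).fst.prod ((jointLawXW σ).snd) = baseMeas.withDensity (Gden σ) := by
  rw [fst_joint, snd_joint hσ]
  have hg1 := measurable_gaussianPDF (1:ℝ) (σ^2).toNNReal
  have hg2 := measurable_gaussianPDF (-1:ℝ) (σ^2).toNNReal
  have hsnd : (2 : ℝ≥0∞)⁻¹ • gaussianReal 1 (σ^2).toNNReal
      + (2 : ℝ≥0∞)⁻¹ • gaussianReal (-1) (σ^2).toNNReal
      = (volume : Measure ℝ).withDensity
          (fun w => 2⁻¹ * gaussianPDF 1 (σ^2).toNNReal w + 2⁻¹ * gaussianPDF (-1) (σ^2).toNNReal w) := by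
    have : (fun w => 2⁻¹ * gaussianPDF 1 (σ^2).toNNReal w + 2⁻¹ * gaussianPDF (-1) (σ^2).toNNReal w)
        = ((2:ℝ≥0∞)⁻¹ • gaussianPDF 1 (σ^2).toNNReal) + ((2:ℝ≥0∞)⁻¹ • gaussianPDF (-1) (σ^2).toNNReal) := rfl
    rw [this, withDensity_add_left (hg1.const_smul _), withDensity_smul _ hg1,
      withDensity_smul _ hg2, gaussianReal_of_var_ne_zero 1 (var_ne_zero hσ),
      gaussianReal_of_var_ne_zero (-1) (var_ne_zero hσ)]
  rw [hsnd, prod_withDensity_snd (g := fun w => 2⁻¹ * gaussianPDF 1 (σ^2).toNNReal w + 2⁻¹ * gaussianPDF (-1) (σ^2).toNNReal w) _ _ ((hg1.const_mul _).add (hg2.const_mul _))]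
  · rfl
  · intro y
    simp [gaussianPDF]
    exact ⟨ENNReal.mul_ne_top (by simp) ENNReal.ofReal_ne_top,
      ENNReal.mul_ne_top (by simp) ENNReal.ofReal_ne_top⟩

lemma Gden_ne_zero {σ : ℝ} (hσ : 0 < σ) (q : ℝ × ℝ) : Gden σ q ≠ 0 := by
  have := gaussianPDF_pos 1 (var_ne_zero hσ) q.2
  simp only [Gden, ne_eq, add_eq_zero, mul_eq_zero, not_and, not_or]
  intro h
  rcases h with h | h
  · simp at h
  · exact absurd h this.ne'

lemma Gden_ne_top (σ : ℝ) (q : ℝ × ℝ) : Gden σ q ≠ ∞ := by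
  simp only [Gden, gaussianPDF]
  exact ENNReal.add_ne_top.2 ⟨ENNReal.mul_ne_top (by simp) ENNReal.ofReal_ne_top,
    ENNReal.mul_ne_top (by simp) ENNReal.ofReal_ne_top⟩

lemma rnDeriv_joint {σ : ℝ} (hσ : 0 < σ) :
    (jointLawXW σ).rnDeriv ((jointLawXW σ).fst.prod ((jointLawXW σ).snd))
      =ᵐ[jointLawXW σ] fun q => (Gden σ q)⁻¹ * Fden σ q := by
  have hac : jointLawXW σ ≪ baseMeas := by
    rw [joint_eq_withDensity hσ]; exact withDensity_absolutelyContinuous _ _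
  have h1 : (jointLawXW σ).rnDeriv (baseMeas.withDensity (Gden σ))
      =ᵐ[baseMeas] fun q => (Gden σ q)⁻¹ * (jointLawXW σ).rnDeriv baseMeas q :=
    Measure.rnDeriv_withDensity_right (jointLawXW σ) baseMeas
      (measurable_Gden σ).aemeasurable (ae_of_all _ (Gden_ne_zero hσ))
      (ae_of_all _ (Gden_ne_top σ))
  have h2 : (jointLawXW σ).rnDeriv baseMeas =ᵐ[baseMeas] Fden σ := by
    rw [joint_eq_withDensity hσ]
    exact Measure.rnDeriv_withDensity baseMeas (measurable_Fden σ)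
  rw [prodMarg_eq_withDensity hσ]
  filter_upwards [hac.ae_le h1, hac.ae_le h2] with q hq1 hq2
  rw [hq1, hq2]

lemma coe_var {σ : ℝ} : (((σ^2).toNNReal : ℝ≥0) : ℝ) = σ^2 :=
  Real.coe_toNNReal _ (sq_nonneg σ)

lemma pdf_ratio {σ : ℝ} (hσ : 0 < σ) (x w : ℝ) :
    gaussianPDFReal (-x) (σ^2).toNNReal w
      = gaussianPDFReal x (σ^2).toNNReal w * Real.exp (-2*x*w/σ^2) := by
  unfold gaussianPDFReal
  have hexp : Real.exp (-(w - -x)^2 / (2*((σ^2).toNNReal : ℝ)))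
      = Real.exp (-(w-x)^2/(2*((σ^2).toNNReal : ℝ))) * Real.exp (-2*x*w/σ^2) := by
    rw [← Real.exp_add]
    congr 1
    rw [coe_var]
    have h2 : (σ:ℝ)^2 ≠ 0 := by positivity
    field_simp
    ring
  rw [hexp]
  ring

lemma log_one_add_exp_le (t : ℝ) : Real.log (1 + Real.exp t) ≤ Real.log 2 + |t| := by
  rcases le_total t 0 with h | h
  · have h1 : (1:ℝ) + Real.exp t ≤ 2 := by
      have := Real.exp_le_one_iff.2 h; linarith
    calc Real.log (1 + Real.exp t) ≤ Real.log 2 :=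
          Real.log_le_log (by positivity) h1
      _ ≤ Real.log 2 + |t| := le_add_of_nonneg_right (abs_nonneg t)
  · have h1 : (1:ℝ) + Real.exp t ≤ 2 * Real.exp t := by
      have := Real.one_le_exp h; linarith
    calc Real.log (1 + Real.exp t) ≤ Real.log (2 * Real.exp t) :=
          Real.log_le_log (by positivity) h1
      _ = Real.log 2 + t := by rw [Real.log_mul two_ne_zero (Real.exp_ne_zero t), Real.log_exp]
      _ ≤ Real.log 2 + |t| := by gcongr; exact le_abs_self t

lemma log_one_add_exp_nonneg (t : ℝ) : 0 ≤ Real.log (1 + Real.exp t) :=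
  Real.log_nonneg (by have := Real.exp_pos t; linarith)

lemma integrable_abs_std : Integrable (fun z : ℝ => |z|) (gaussianReal 0 1) := by
  rw [gaussianReal_of_var_ne_zero 0 one_ne_zero]
  have hmeas : AEMeasurable (fun x : ℝ => (gaussianPDFReal 0 1 x).toNNReal) volume :=
    ((measurable_gaussianPDFReal 0 1).real_toNNReal).aemeasurable
  have h := (integrable_withDensity_iff_integrable_smul₀ (g := fun z : ℝ => |z|) hmeas).2
  have heq : (volume.withDensity fun x => ((gaussianPDFReal 0 1 x).toNNReal : ℝ≥0∞))
      = volume.withDensity (gaussianPDF 0 1) := rfl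
  rw [heq] at h
  apply h
  have hbase : Integrable (fun x : ℝ => (√(2*π))⁻¹ * |x * Real.exp (-(2⁻¹:ℝ) * x^2)|) volume :=
    ((integrable_mul_exp_neg_mul_sq (by norm_num : (0:ℝ) < 2⁻¹)).abs).const_mul _
  refine hbase.congr (Filter.Eventually.of_forall fun x => ?_)
  simp only [NNReal.smul_def, Real.coe_toNNReal _ (gaussianPDFReal_nonneg 0 1 x)]
  unfold gaussianPDFReal
  rw [abs_mul, abs_of_nonneg (Real.exp_nonneg _)]
  simp only [NNReal.coe_one, mul_one, sub_zero]
  ring_nf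

lemma integrable_log_one_add_exp (a b : ℝ) :
    Integrable (fun z : ℝ => Real.log (1 + Real.exp (a + b*z))) (gaussianReal 0 1) := by
  have hg : Integrable (fun z : ℝ => (Real.log 2 + |a|) + |b| * |z|) (gaussianReal 0 1) :=
    (integrable_const _).add (integrable_abs_std.const_mul _)
  refine hg.mono' ?_ (Filter.Eventually.of_forall fun z => ?_)
  · refine (Measurable.aestronglyMeasurable ?_)
    exact (measurable_const.add ((measurable_const.add (measurable_id.const_mul b)).exp)).log
  · rw [Real.norm_eq_abs, abs_of_nonneg (log_one_add_exp_nonneg _)]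
    calc Real.log (1 + Real.exp (a + b*z)) ≤ Real.log 2 + |a + b*z| := log_one_add_exp_le _
      _ ≤ Real.log 2 + (|a| + |b| * |z|) := by gcongr; rw [← abs_mul]; exact abs_add_le a (b*z)
      _ = (Real.log 2 + |a|) + |b| * |z| := by ring

lemma gaussianReal_scaled {σ : ℝ} (hσ : 0 < σ) :
    gaussianReal 0 (σ^2).toNNReal
      = Measure.map (fun z : ℝ => σ * z) (gaussianReal 0 1) := by
  rw [gaussianReal_map_const_mul σ]
  congr 1
  · ring
  · ext
    simp [coe_var]
    positivity

lemma gaussianReal_neg_symm (v : ℝ≥0) :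
    Measure.map (fun n : ℝ => -n) (gaussianReal 0 v) = gaussianReal 0 v := by
  have h := gaussianReal_map_const_mul (μ := 0) (v := v) (-1)
  have he : (fun x : ℝ => (-1) * x) = fun n : ℝ => -n := by funext n; ring
  rw [he] at h
  rw [h]
  congr 1
  · ring
  · ext
    norm_num

lemma stdNormalCDF_eq (x : ℝ) :
    stdNormalCDF x = ∫ t in Set.Iic x, gaussianPDFReal 0 1 t := by
  rw [stdNormalCDF, gaussianReal_apply_eq_integral 0 one_ne_zero,
    ENNReal.toReal_ofReal (setIntegral_nonneg measurableSet_Iic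
      (fun t _ => gaussianPDFReal_nonneg 0 1 t))]

lemma continuous_stdNormalCDF : Continuous stdNormalCDF := by
  have hint := integrable_gaussianPDFReal 0 1
  have h : ∀ x : ℝ, stdNormalCDF x
      = stdNormalCDF 0 + ∫ t in (0:ℝ)..x, gaussianPDFReal 0 1 t := by
    intro x
    rw [stdNormalCDF_eq, stdNormalCDF_eq,
      ← intervalIntegral.integral_Iic_sub_Iic hint.integrableOn hint.integrableOn]
    ring
  rw [funext h]
  exact continuous_const.add (hint.continuous_primitive 0)

lemma stdNormalCDF_zero : stdNormalCDF 0 = 1/2 := by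
  have hneg := gaussianReal_neg_symm 1
  set m := gaussianReal 0 1 with hm
  have h1 : m (Set.Iic 0) = m (Set.Ici 0) := by
    conv_lhs => rw [← hneg]
    rw [Measure.map_apply measurable_neg measurableSet_Iic]
    congr 1
    ext y
    simp
  have hsing : m {(0:ℝ)} = 0 :=
    gaussianReal_absolutelyContinuous 0 one_ne_zero (measure_singleton 0)
  have h2 : m (Set.Iic 0) + m (Set.Ici 0) = 1 := by
    rw [← measure_union_add_inter (Set.Iic 0) measurableSet_Ici, Set.Iic_union_Ici,
      Set.Iic_inter_Ici, Set.Icc_self, hsing, add_zero, measure_univ]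
  rw [← h1] at h2
  have hfin : m (Set.Iic 0) ≠ ∞ := (measure_lt_top m _).ne
  have := congrArg ENNReal.toReal h2
  rw [ENNReal.toReal_add hfin hfin, ENNReal.toReal_one] at this
  rw [stdNormalCDF]
  show (m (Set.Iic 0)).toReal = 1/2
  linarith

lemma stdNormalCDF_lt_half {x : ℝ} (hx : x < 0) : stdNormalCDF x < 1/2 := by
  have hint := integrable_gaussianPDFReal 0 1
  have hdiff : stdNormalCDF 0 - stdNormalCDF x = ∫ t in x..(0:ℝ), gaussianPDFReal 0 1 t := by
    rw [stdNormalCDF_eq, stdNormalCDF_eq]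
    exact intervalIntegral.integral_Iic_sub_Iic hint.integrableOn hint.integrableOn
  have hpos : 0 < ∫ t in x..(0:ℝ), gaussianPDFReal 0 1 t := by
    apply intervalIntegral.intervalIntegral_pos_of_pos_on hint.intervalIntegrable
    · exact fun t _ => gaussianPDFReal_pos 0 1 t one_ne_zero
    · exact hx
  have := stdNormalCDF_zero
  linarith

lemma binEnt_eq (x : ℝ) : binEnt x = Real.binEntropy x / Real.log 2 := by
  rw [binEnt, Real.binEntropy, Real.log_inv, Real.log_inv, Real.logb, Real.logb]
  field_simp
  ring

lemma binEnt_half : binEnt 2⁻¹ = 1 := by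
  rw [binEnt_eq, Real.binEntropy_two_inv, div_self (Real.log_ne_zero_of_pos_of_ne_one two_pos (by norm_num))]

lemma binEnt_lt_one {x : ℝ} (h : x ≠ 2⁻¹) : binEnt x < 1 := by
  rw [binEnt_eq, div_lt_one (Real.log_pos one_lt_two)]
  exact Real.binEntropy_lt_log_two.2 h

lemma continuous_binEnt : Continuous binEnt := by
  have : binEnt = fun x => Real.binEntropy x / Real.log 2 := funext binEnt_eq
  rw [this]
  exact Real.binEntropy_continuous.div_const _

lemma ratio_toReal {σ : ℝ} (hσ : 0 < σ) (x w : ℝ) (hx : x = 1 ∨ x = -1) :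
    ((Gden σ (x, w))⁻¹ * Fden σ (x, w)).toReal = 2 / (1 + Real.exp (-2*x*w/σ^2)) := by
  have hp1 := gaussianPDFReal_pos 1 (σ^2).toNNReal w (var_ne_zero hσ)
  have hp2 := gaussianPDFReal_pos (-1) (σ^2).toNNReal w (var_ne_zero hσ)
  have htr : ((Gden σ (x, w))⁻¹ * Fden σ (x, w)).toReal
      = (2⁻¹ * gaussianPDFReal 1 (σ^2).toNNReal w
          + 2⁻¹ * gaussianPDFReal (-1) (σ^2).toNNReal w)⁻¹
        * gaussianPDFReal x (σ^2).toNNReal w := by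
    rw [ENNReal.toReal_mul, ENNReal.toReal_inv]
    congr 1
    · congr 1
      rw [Gden]
      simp only [gaussianPDF]
      rw [ENNReal.toReal_add (ENNReal.mul_ne_top (by simp) ENNReal.ofReal_ne_top)
        (ENNReal.mul_ne_top (by simp) ENNReal.ofReal_ne_top),
        ENNReal.toReal_mul, ENNReal.toReal_mul,
        ENNReal.toReal_ofReal hp1.le, ENNReal.toReal_ofReal hp2.le]
      norm_num
    · rw [Fden]
      simp only [gaussianPDF]
      rw [ENNReal.toReal_ofReal (gaussianPDFReal_nonneg _ _ _)]
  rw [htr]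
  have hexp : (0:ℝ) < Real.exp (-2*x*w/σ^2) := Real.exp_pos _
  rcases hx with rfl | rfl
  · have hr : gaussianPDFReal (-1) (σ^2).toNNReal w
        = gaussianPDFReal 1 (σ^2).toNNReal w * Real.exp (-2*1*w/σ^2) := pdf_ratio hσ 1 w
    rw [hr]
    have he : (0:ℝ) < Real.exp (-2*1*w/σ^2) := Real.exp_pos _
    field_simp
  · have hr : gaussianPDFReal 1 (σ^2).toNNReal w
        = gaussianPDFReal (-1) (σ^2).toNNReal w * Real.exp (-2*(-1)*w/σ^2) := by
      have := pdf_ratio hσ (-1) w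
      rw [neg_neg] at this
      exact this
    rw [hr]
    have he : (0:ℝ) < Real.exp (-2*(-1)*w/σ^2) := Real.exp_pos _
    field_simp
    ring

lemma joint_ae_fst {σ : ℝ} :
    ∀ᵐ q ∂(jointLawXW σ), q.1 = 1 ∨ q.1 = -1 := by
  have h1 : Measurable (fun n : ℝ => ((1:ℝ), 1 + n)) := by fun_prop
  have h2 : Measurable (fun n : ℝ => ((-1:ℝ), -1 + n)) := by fun_prop
  rw [ae_iff]
  have hms : MeasurableSet {q : ℝ × ℝ | ¬(q.1 = 1 ∨ q.1 = -1)} := by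
    have : {q : ℝ × ℝ | ¬(q.1 = 1 ∨ q.1 = -1)} = Prod.fst ⁻¹' ({1, -1} : Set ℝ)ᶜ := by
      ext q
      simp only [Set.mem_setOf_eq, Set.mem_compl_iff, Set.mem_preimage, Set.mem_insert_iff,
        Set.mem_singleton_iff]
    rw [this]
    exact measurable_fst ((MeasurableSet.insert (measurableSet_singleton _) 1).compl)
  rw [jointLawXW]
  simp only [Measure.coe_add, Measure.coe_smul, Pi.add_apply, Pi.smul_apply, smul_eq_mul]
  rw [Measure.map_apply h1 hms, Measure.map_apply h2 hms]
  have e1 : (fun n : ℝ => ((1:ℝ), 1 + n)) ⁻¹' {q : ℝ × ℝ | ¬(q.1 = 1 ∨ q.1 = -1)} = ∅ := by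
    ext n; simp
  have e2 : (fun n : ℝ => ((-1:ℝ), -1 + n)) ⁻¹' {q : ℝ × ℝ | ¬(q.1 = 1 ∨ q.1 = -1)} = ∅ := by
    ext n; simp
  rw [e1, e2]
  simp

lemma llr_ae {σ : ℝ} (hσ : 0 < σ) :
    llr (jointLawXW σ) ((jointLawXW σ).fst.prod (jointLawXW σ).snd)
      =ᵐ[jointLawXW σ]
        fun q => Real.log 2 - Real.log (1 + Real.exp (-2*q.1*q.2/σ^2)) := by
  filter_upwards [rnDeriv_joint hσ, joint_ae_fst] with q hq hq1
  rw [llr_def]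
  simp only []
  rw [hq, ratio_toReal hσ q.1 q.2 hq1,
    Real.log_div two_ne_zero (by positivity), ]

lemma measurable_Lf (σ : ℝ) :
    Measurable (fun q : ℝ × ℝ => Real.log 2 - Real.log (1 + Real.exp (-2*q.1*q.2/σ^2))) := by
  have h : Measurable (fun q : ℝ × ℝ => -2*q.1*q.2/σ^2) := by fun_prop
  exact measurable_const.sub ((measurable_const.add h.exp).log)

lemma integrable_psi {σ : ℝ} (hσ : 0 < σ) :
    Integrable (fun z : ℝ => Real.log (1 + Real.exp (-2*(1+σ*z)/σ^2))) (gaussianReal 0 1) := by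
  have he : ∀ z : ℝ, (-2/σ^2) + (-2/σ)*z = -2*(1+σ*z)/σ^2 := by
    intro z; field_simp; ring
  have h := integrable_log_one_add_exp (-2/σ^2) (-2/σ)
  simpa only [he] using h

lemma integral_llr_eq {σ : ℝ} (hσ : 0 < σ) :
    ∫ q, llr (jointLawXW σ) ((jointLawXW σ).fst.prod (jointLawXW σ).snd) q ∂(jointLawXW σ)
      = Real.log 2 - ∫ z, Real.log (1 + Real.exp (-2*(1+σ*z)/σ^2)) ∂(gaussianReal 0 1) := by
  have h1 : Measurable (fun n : ℝ => ((1:ℝ), 1 + n)) := by fun_prop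
  have h2 : Measurable (fun n : ℝ => ((-1:ℝ), -1 + n)) := by fun_prop
  have hσm : Measurable (fun z : ℝ => σ * z) := by fun_prop
  set Lf : ℝ × ℝ → ℝ := fun q => Real.log 2 - Real.log (1 + Real.exp (-2*q.1*q.2/σ^2)) with hLf
  set ψ : ℝ → ℝ := fun z => Real.log 2 - Real.log (1 + Real.exp (-2*(1+σ*z)/σ^2)) with hψ
  have hLm : Measurable Lf := measurable_Lf σ
  have hψint : Integrable ψ (gaussianReal 0 1) := (integrable_const _).sub (integrable_psi hσ)
  have hG0 : gaussianReal 0 (σ^2).toNNReal = Measure.map (fun z : ℝ => σ * z) (gaussianReal 0 1) :=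
    gaussianReal_scaled hσ
  -- first component
  have hc1 : ∀ z : ℝ, Lf ((1:ℝ), 1 + σ * z) = ψ z := by
    intro z
    simp only [hLf, hψ]
    have : -2*(1:ℝ)*(1+σ*z)/σ^2 = -2*(1+σ*z)/σ^2 := by ring
    rw [this]
  have hm1 : ∫ q, Lf q ∂(Measure.map (fun n => ((1:ℝ), 1 + n)) (gaussianReal 0 (σ^2).toNNReal))
      = ∫ z, ψ z ∂(gaussianReal 0 1) := by
    rw [hG0, Measure.map_map h1 hσm,
      integral_map (h1.comp hσm).aemeasurable hLm.aestronglyMeasurable]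
    exact integral_congr_ae (Filter.Eventually.of_forall fun z => hc1 z)
  have hint1 : Integrable Lf
      (Measure.map (fun n => ((1:ℝ), 1 + n)) (gaussianReal 0 (σ^2).toNNReal)) := by
    rw [hG0, Measure.map_map h1 hσm]
    refine (integrable_map_measure hLm.aestronglyMeasurable
      (h1.comp hσm).aemeasurable).2 ?_
    exact hψint.congr (Filter.Eventually.of_forall fun z => (hc1 z).symm)
  -- second component
  have hc2 : ∀ z : ℝ, Lf ((-1:ℝ), -1 + -(σ * z)) = ψ z := by
    intro z
    simp only [hLf, hψ]
    have : -2*(-1:ℝ)*(-1 + -(σ*z))/σ^2 = -2*(1+σ*z)/σ^2 := by ring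
    rw [this]
  have hmap2 : Measure.map (fun n => ((-1:ℝ), -1 + n)) (gaussianReal 0 (σ^2).toNNReal)
      = Measure.map ((fun n => ((-1:ℝ), -1 + n)) ∘ (fun n : ℝ => -n) ∘ (fun z : ℝ => σ * z))
          (gaussianReal 0 1) := by
    conv_lhs => rw [← gaussianReal_neg_symm ((σ^2).toNNReal)]
    rw [Measure.map_map h2 measurable_neg, hG0,
      Measure.map_map (h2.comp measurable_neg) hσm]
    rfl
  have hm2 : ∫ q, Lf q ∂(Measure.map (fun n => ((-1:ℝ), -1 + n)) (gaussianReal 0 (σ^2).toNNReal))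
      = ∫ z, ψ z ∂(gaussianReal 0 1) := by
    rw [hmap2, integral_map ((h2.comp (measurable_neg.comp hσm)).aemeasurable)
      hLm.aestronglyMeasurable]
    exact integral_congr_ae (Filter.Eventually.of_forall fun z => hc2 z)
  have hint2 : Integrable Lf
      (Measure.map (fun n => ((-1:ℝ), -1 + n)) (gaussianReal 0 (σ^2).toNNReal)) := by
    rw [hmap2]
    refine (integrable_map_measure hLm.aestronglyMeasurable
      (h2.comp (measurable_neg.comp hσm)).aemeasurable).2 ?_
    exact hψint.congr (Filter.Eventually.of_forall fun z => (hc2 z).symm)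
  -- combine
  rw [integral_congr_ae (llr_ae hσ)]
  show ∫ q, Lf q ∂(jointLawXW σ) = _
  rw [jointLawXW, integral_add_measure (hint1.smul_measure (by simp))
    (hint2.smul_measure (by simp)), integral_smul_measure, integral_smul_measure, hm1, hm2]
  have hS : ∫ z, ψ z ∂(gaussianReal 0 1)
      = Real.log 2 - ∫ z, Real.log (1 + Real.exp (-2*(1+σ*z)/σ^2)) ∂(gaussianReal 0 1) := by
    rw [hψ, integral_sub (integrable_const _) (integrable_psi hσ), integral_const]
    simp
  rw [hS]
  have htr : ((2:ℝ≥0∞)⁻¹).toReal = (2:ℝ)⁻¹ := by simp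
  rw [htr]
  simp only [smul_eq_mul]
  ring

lemma mutualInfo_eq {σ : ℝ} (hσ : 0 < σ) :
    mutualInfoAntipodalAWGN σ
      = (Real.log 2 - ∫ z, Real.log (1 + Real.exp (-2*(1+σ*z)/σ^2)) ∂(gaussianReal 0 1))
          / Real.log 2 := by
  rw [mutualInfoAntipodalAWGN, klBits, integral_llr_eq hσ]

lemma tendsto_A :
    Tendsto (fun σ : ℝ => ∫ z, Real.log (1 + Real.exp (-2*(1+σ*z)/σ^2)) ∂(gaussianReal 0 1))
      atTop (nhds (Real.log 2)) := by
  have hlog2 : Real.log 2 = ∫ _ : ℝ, Real.log 2 ∂(gaussianReal 0 1) := by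
    rw [integral_const]; simp
  rw [hlog2]
  apply tendsto_integral_filter_of_dominated_convergence
    (bound := fun z : ℝ => Real.log 2 + (2 + 2*|z|))
  · refine Filter.Eventually.of_forall fun σ => ?_
    have h : Measurable (fun z : ℝ => -2*(1+σ*z)/σ^2) := by fun_prop
    exact ((measurable_const.add h.exp).log).aestronglyMeasurable
  · filter_upwards [eventually_ge_atTop (1:ℝ)] with σ hσ
    refine Filter.Eventually.of_forall fun z => ?_
    rw [Real.norm_eq_abs, abs_of_nonneg (log_one_add_exp_nonneg _)]
    have h1 : Real.log (1 + Real.exp (-2*(1+σ*z)/σ^2))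
        ≤ Real.log 2 + |(-2*(1+σ*z)/σ^2)| := log_one_add_exp_le _
    have hσ0 : (0:ℝ) < σ := lt_of_lt_of_le one_pos hσ
    have h2 : |(-2*(1+σ*z)/σ^2)| ≤ 2 + 2*|z| := by
      rw [abs_div, abs_of_pos (by positivity : (0:ℝ) < σ^2)]
      rw [div_le_iff₀ (by positivity : (0:ℝ) < σ^2)]
      have ha : |(-2)*(1+σ*z)| = 2 * |1+σ*z| := by
        rw [abs_mul]; norm_num
      rw [ha]
      have hb : |1+σ*z| ≤ 1 + σ*|z| := by
        calc |1+σ*z| ≤ |1| + |σ*z| := abs_add_le 1 (σ*z)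
          _ = 1 + σ*|z| := by rw [abs_one, abs_mul, abs_of_pos hσ0]
      have hz := abs_nonneg z
      nlinarith [sq_nonneg σ, sq_nonneg (σ-1)]
    linarith
  · exact (integrable_const _).add ((integrable_const 2).add (integrable_abs_std.const_mul 2))
  · refine Filter.Eventually.of_forall fun z => ?_
    have hinner : Tendsto (fun σ : ℝ => -2*(1+σ*z)/σ^2) atTop (nhds 0) := by
      have he : ∀ᶠ σ : ℝ in atTop, (-2)/σ^2 + (-2*z)/σ = -2*(1+σ*z)/σ^2 := by
        filter_upwards [eventually_ge_atTop (1:ℝ)] with σ hσ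
        have hσ0 : σ ≠ 0 := by intro h; rw [h] at hσ; linarith
        field_simp
        ring
      refine Tendsto.congr' he ?_
      have h1 : Tendsto (fun σ : ℝ => (-2:ℝ)/σ^2) atTop (nhds 0) :=
        tendsto_const_nhds.div_atTop (tendsto_pow_atTop two_ne_zero)
      have h2 : Tendsto (fun σ : ℝ => (-2*z)/σ) atTop (nhds 0) :=
        tendsto_const_nhds.div_atTop tendsto_id
      simpa using h1.add h2
    have hne : (1:ℝ) + Real.exp 0 ≠ 0 := by positivity
    have hcont : Tendsto (fun t : ℝ => Real.log (1 + Real.exp t)) (nhds 0)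
        (nhds (Real.log (1 + Real.exp 0))) :=
      (((continuous_const.add Real.continuous_exp).tendsto 0)).log hne
    have := hcont.comp hinner
    simp only [Function.comp, Real.exp_zero] at this
    convert this using 2
    norm_num
    norm_num

lemma tendsto_mutualInfo :
    Tendsto (fun σ : ℝ => mutualInfoAntipodalAWGN σ) atTop (nhds 0) := by
  have heq : ∀ᶠ σ : ℝ in atTop, (Real.log 2
      - ∫ z, Real.log (1 + Real.exp (-2*(1+σ*z)/σ^2)) ∂(gaussianReal 0 1)) / Real.log 2
      = mutualInfoAntipodalAWGN σ := by
    filter_upwards [eventually_gt_atTop (0:ℝ)] with σ hσ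
    exact (mutualInfo_eq hσ).symm
  refine Tendsto.congr' heq ?_
  have h := (tendsto_const_nhds (x := Real.log 2) (f := atTop (α := ℝ))).sub tendsto_A
  have h2 := h.div_const (Real.log 2)
  simpa using h2


end EquivocationAux

/-- The maximum equivocation loss
`(h(p_W) - 1 + I(X;W)) / (h(p_W) - h(p))`, with `p = Φ(-1/σ_M)` and
`p_W = Φ(-1/√(σ_M² + σ_W²))`, tends to `0` as the wiretap noise power `σ_W` grows. -/
theorem max_equivocation_loss_tendsto_zero (σM : ℝ) (hσM : 0 < σM) (p : ℝ)
    (hp : p = stdNormalCDF (-1 / σM)) :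
    Tendsto
      (fun σW : ℝ =>
        (binEnt (stdNormalCDF (-1 / Real.sqrt (σM ^ 2 + σW ^ 2))) - 1 +
            mutualInfoAntipodalAWGN (Real.sqrt (σM ^ 2 + σW ^ 2))) /
          (binEnt (stdNormalCDF (-1 / Real.sqrt (σM ^ 2 + σW ^ 2))) - binEnt p))
      atTop (nhds 0) := by
  have hs : Tendsto (fun σW : ℝ => Real.sqrt (σM ^ 2 + σW ^ 2)) atTop atTop := by
    refine tendsto_atTop_mono' atTop ?_ tendsto_id
    filter_upwards [eventually_ge_atTop (0:ℝ)] with σW hW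
    have h1 : σW = Real.sqrt (σW^2) := (Real.sqrt_sq hW).symm
    calc (id σW : ℝ) = Real.sqrt (σW^2) := h1
      _ ≤ Real.sqrt (σM^2 + σW^2) := Real.sqrt_le_sqrt (by nlinarith [sq_nonneg σM])
  have hxW : Tendsto (fun σW : ℝ => -1 / Real.sqrt (σM ^ 2 + σW ^ 2)) atTop (nhds 0) :=
    tendsto_const_nhds.div_atTop hs
  have hpW : Tendsto (fun σW : ℝ => stdNormalCDF (-1 / Real.sqrt (σM ^ 2 + σW ^ 2)))
      atTop (nhds (1/2)) := by
    have := (continuous_stdNormalCDF.tendsto 0).comp hxW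
    rwa [stdNormalCDF_zero] at this
  have hbW : Tendsto (fun σW : ℝ => binEnt (stdNormalCDF (-1 / Real.sqrt (σM ^ 2 + σW ^ 2))))
      atTop (nhds 1) := by
    have := (continuous_binEnt.tendsto (1/2)).comp hpW
    have h12 : binEnt (1/2) = 1 := by rw [one_div]; exact binEnt_half
    rwa [h12] at this
  have hIW : Tendsto (fun σW : ℝ => mutualInfoAntipodalAWGN (Real.sqrt (σM ^ 2 + σW ^ 2)))
      atTop (nhds 0) := tendsto_mutualInfo.comp hs
  have hnum : Tendsto (fun σW : ℝ =>
      binEnt (stdNormalCDF (-1 / Real.sqrt (σM ^ 2 + σW ^ 2))) - 1 +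
        mutualInfoAntipodalAWGN (Real.sqrt (σM ^ 2 + σW ^ 2))) atTop (nhds 0) := by
    have := (hbW.sub_const 1).add hIW
    simpa using this
  have hplt : p < 1/2 := by
    rw [hp]
    exact stdNormalCDF_lt_half (div_neg_of_neg_of_pos (by norm_num) hσM)
  have hpne : p ≠ 2⁻¹ := by
    intro h
    rw [h] at hplt
    norm_num at hplt
  have hne : (1:ℝ) - binEnt p ≠ 0 := by
    have := binEnt_lt_one hpne
    intro h
    have : binEnt p = 1 := by linarith
    linarith [binEnt_lt_one hpne]
  have hden : Tendsto (fun σW : ℝ =>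
      binEnt (stdNormalCDF (-1 / Real.sqrt (σM ^ 2 + σW ^ 2))) - binEnt p)
      atTop (nhds (1 - binEnt p)) := hbW.sub_const _
  have := hnum.div hden hne
  rwa [zero_div] at this
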